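/- Let h₁(t) := log(t − 1) + log(t + 1) − 2·log(t) + 1/t². Then h₁(t) < 0 for every t > 1, the improper integral ∫₁^∞ (−h₁(t))·t dt equals 1/2, and consequently for every b > 1 one has ∫₁^b |h₁(t)|·t dt ≤ 1/2. -/

import Mathlib

open Set MeasureTheory Filter Topology

private noncomputable def Fh (t : ℝ) : ℝ :=
  ((t ^ 2 - 1) * (2 * Real.log t) - (t ^ 2 - 1) * Real.log (t ^ 2 - 1) - 1) / 2

private lemma h1_neg : ∀ t : ℝ, 1 < t →
    Real.log (t - 1) + Real.log (t + 1) - 2 * Real.log t + 1 / t ^ 2 < 0 := by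
  intro t ht
  have ht0 : 0 < t := lt_trans one_pos ht
  have h1 : t - 1 > 0 := by linarith
  have h2 : t + 1 > 0 := by linarith
  have hsq : 0 < t ^ 2 - 1 := by nlinarith
  have hlog : Real.log (t - 1) + Real.log (t + 1) = Real.log (t ^ 2 - 1) := by
    rw [← Real.log_mul h1.ne' h2.ne']; ring_nf
  have h2log : 2 * Real.log t = Real.log (t ^ 2) := by
    rw [Real.log_pow]; push_cast; ring
  set y : ℝ := (t ^ 2 - 1) / t ^ 2 with hy
  have hy0 : 0 < y := div_pos hsq (by positivity)
  have hy1 : y ≠ 1 := ne_of_lt ((div_lt_one (by positivity)).2 (by linarith))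
  have hlt : Real.log y < y - 1 := Real.log_lt_sub_one_of_pos hy0 hy1
  have hylog : Real.log y = Real.log (t ^ 2 - 1) - Real.log (t ^ 2) :=
    Real.log_div hsq.ne' (by positivity)
  have hyval : y - 1 = -(1 / t ^ 2) := by rw [hy]; field_simp; ring
  rw [hlog, h2log]
  rw [hylog, hyval] at hlt
  linarith

private lemma Fh_deriv : ∀ x : ℝ, x ∈ Set.Ioi (1:ℝ) →
    HasDerivAt Fh
      (-(Real.log (x - 1) + Real.log (x + 1) - 2 * Real.log x + 1 / x ^ 2) * x) x := by
  intro x hx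
  rw [Set.mem_Ioi] at hx
  have hx0 : 0 < x := lt_trans one_pos hx
  have hsq : 0 < x ^ 2 - 1 := by nlinarith
  have hsqr : HasDerivAt (fun t : ℝ => t ^ 2 - 1) (2 * x) x := by
    simpa using ((hasDerivAt_pow 2 x).sub_const 1)
  have hlog : HasDerivAt (fun t : ℝ => 2 * Real.log t) (2 * x⁻¹) x :=
    (Real.hasDerivAt_log hx0.ne').const_mul 2
  have hlogsq : HasDerivAt (fun t : ℝ => Real.log (t ^ 2 - 1)) (2 * x / (x ^ 2 - 1)) x := by
    simpa using hsqr.log hsq.ne'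
  have h1 : HasDerivAt (fun t : ℝ => (t ^ 2 - 1) * (2 * Real.log t))
      (2 * x * (2 * Real.log x) + (x ^ 2 - 1) * (2 * x⁻¹)) x := hsqr.mul hlog
  have h2 : HasDerivAt (fun t : ℝ => (t ^ 2 - 1) * Real.log (t ^ 2 - 1))
      (2 * x * Real.log (x ^ 2 - 1) + (x ^ 2 - 1) * (2 * x / (x ^ 2 - 1))) x :=
    hsqr.mul hlogsq
  have h3 := ((h1.sub h2).sub_const 1).div_const 2
  convert h3 using 1
  rfl
  rfl
  rfl
  have hlogm : Real.log (x ^ 2 - 1) = Real.log (x - 1) + Real.log (x + 1) := by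
    rw [← Real.log_mul (by linarith : x - 1 ≠ 0) (by linarith : x + 1 ≠ 0)]; ring_nf
  rw [hlogm]
  field_simp
  ring

private lemma Fh_tendsto : Tendsto Fh atTop (𝓝 0) := by
  have key : Tendsto (fun t : ℝ => (t ^ 2 - 1) * Real.log (1 + 1 / (t ^ 2 - 1)))
      atTop (𝓝 1) := by
    have hcomp : Tendsto (fun t : ℝ => t ^ 2 - 1) atTop atTop := by
      apply tendsto_atTop_add_const_right
      exact (tendsto_pow_atTop (two_ne_zero)).comp tendsto_id |>.congr (by simp)
    exact (Real.tendsto_mul_log_one_add_div_atTop 1).comp hcomp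
  have heq : ∀ᶠ t : ℝ in atTop, ((fun t : ℝ => ((t ^ 2 - 1) * Real.log (1 + 1 / (t ^ 2 - 1)) - 1) / 2) t) = Fh t := by
    filter_upwards [eventually_gt_atTop (1:ℝ)] with t ht
    have ht0 : 0 < t := lt_trans one_pos ht
    have hsq : 0 < t ^ 2 - 1 := by nlinarith
    have : (1 : ℝ) + 1 / (t ^ 2 - 1) = t ^ 2 / (t ^ 2 - 1) := by field_simp; ring
    rw [this, Real.log_div (by positivity) hsq.ne', Fh]
    have h2log : 2 * Real.log t = Real.log (t ^ 2) := by
      rw [Real.log_pow]; push_cast; ring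
    rw [h2log]; ring
  have := ((key.sub_const 1).div_const 2)
  simpa using this.congr' heq

private lemma Fh_cont : ContinuousWithinAt Fh (Set.Ici (1:ℝ)) 1 := by
  apply ContinuousAt.continuousWithinAt
  have h1 : Continuous (fun t : ℝ => (t ^ 2 - 1) * Real.log (t ^ 2 - 1)) :=
    Real.continuous_mul_log.comp (by continuity : Continuous fun t : ℝ => t ^ 2 - 1)
  have h2 : ContinuousAt (fun t : ℝ => (t ^ 2 - 1) * (2 * Real.log t)) 1 := by
    exact ((continuous_pow 2).sub continuous_const).continuousAt.mul
      (continuousAt_const.mul (Real.continuousAt_log one_ne_zero))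
  exact ((h2.sub h1.continuousAt).sub continuousAt_const).div_const 2

theorem h1_integral_bound :
    (∀ t : ℝ, 1 < t →
      Real.log (t - 1) + Real.log (t + 1) - 2 * Real.log t + 1 / t ^ 2 < 0) ∧
    IntegrableOn
      (fun t : ℝ =>
        -(Real.log (t - 1) + Real.log (t + 1) - 2 * Real.log t + 1 / t ^ 2) * t)
      (Set.Ioi 1) ∧
    (∫ t in Set.Ioi (1 : ℝ),
        -(Real.log (t - 1) + Real.log (t + 1) - 2 * Real.log t + 1 / t ^ 2) * t) = 1 / 2 ∧
    (∀ b : ℝ, 1 < b →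
      (∫ t in (1:ℝ)..b,
        |Real.log (t - 1) + Real.log (t + 1) - 2 * Real.log t + 1 / t ^ 2| * t) ≤ 1 / 2) := by
  have hpos : ∀ x ∈ Set.Ioi (1:ℝ),
      0 ≤ -(Real.log (x - 1) + Real.log (x + 1) - 2 * Real.log x + 1 / x ^ 2) * x := by
    intro x hx
    rw [Set.mem_Ioi] at hx
    have := h1_neg x hx
    nlinarith
  have hint : IntegrableOn
      (fun t : ℝ =>
        -(Real.log (t - 1) + Real.log (t + 1) - 2 * Real.log t + 1 / t ^ 2) * t)
      (Set.Ioi 1) :=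
    integrableOn_Ioi_deriv_of_nonneg Fh_cont Fh_deriv hpos Fh_tendsto
  have hval : (∫ t in Set.Ioi (1 : ℝ),
        -(Real.log (t - 1) + Real.log (t + 1) - 2 * Real.log t + 1 / t ^ 2) * t) = 1 / 2 := by
    rw [integral_Ioi_of_hasDerivAt_of_nonneg Fh_cont Fh_deriv hpos Fh_tendsto]
    norm_num [Fh]
  refine ⟨h1_neg, hint, hval, ?_⟩
  intro b hb
  rw [intervalIntegral.integral_of_le hb.le]
  have heq : ∫ t in Set.Ioc (1:ℝ) b,
      |Real.log (t - 1) + Real.log (t + 1) - 2 * Real.log t + 1 / t ^ 2| * t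
      = ∫ t in Set.Ioc (1:ℝ) b,
      -(Real.log (t - 1) + Real.log (t + 1) - 2 * Real.log t + 1 / t ^ 2) * t := by
    apply setIntegral_congr_fun measurableSet_Ioc
    intro t ht
    simp only []
    rw [abs_of_neg (h1_neg t ht.1)]
  rw [heq, ← hval]
  apply setIntegral_mono_set hint
  · filter_upwards [ae_restrict_mem measurableSet_Ioi] with x hx using hpos x hx
  · exact HasSubset.Subset.eventuallyLE Set.Ioc_subset_Ioi_self
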